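/- In the commit-reveal commitment game with two attackers, if β·V̲(γ₁) > c, then the unique pure-strategy Nash equilibrium is that attacker 1 commits and attacker 2 does not commit. -/
import Mathlib


/-- Attacker 1's payoff in the commitment game. -/
def commitPay1 (c β V1 Vlow1 : ℝ) (a1 a2 : Bool) : ℝ :=
  if a1 then -c + β * (if a2 then Vlow1 else V1) else 0

/-- Attacker 2's payoff in the commitment game. -/
def commitPay2 (c β V2 : ℝ) (a2 a1 : Bool) : ℝ :=
  if a2 then -c + β * (if a1 then 0 else V2) else 0

/-- Pure-strategy Nash equilibrium of the commitment game. -/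
def CommitNE (c β V1 Vlow1 V2 : ℝ) (a1 a2 : Bool) : Prop :=
  (∀ b, commitPay1 c β V1 Vlow1 b a2 ≤ commitPay1 c β V1 Vlow1 a1 a2) ∧
  (∀ b, commitPay2 c β V2 b a1 ≤ commitPay2 c β V2 a2 a1)

/-- If `β·V̲(γ₁) > c`, the unique pure-strategy Nash equilibrium of the
commitment game is: attacker 1 commits and attacker 2 does not. -/
theorem strong_attacker_commits_alone (c β V1 Vlow1 V2 : ℝ)
    (hc : 0 < c) (hβ0 : 0 < β) (hβ1 : β ≤ 1)
    (hV2 : 0 ≤ V2) (hVl : Vlow1 ≤ V1) (h : β * Vlow1 > c) :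
    CommitNE c β V1 Vlow1 V2 true false ∧
      ∀ a1 a2, CommitNE c β V1 Vlow1 V2 a1 a2 → a1 = true ∧ a2 = false := by
  have hV1 : β * Vlow1 ≤ β * V1 := by nlinarith
  constructor
  · constructor
    · intro b
      cases b <;> simp [commitPay1] <;> linarith
    · intro b
      cases b <;> simp [commitPay2] <;> linarith
  · intro a1 a2 ⟨h1, h2⟩
    cases a1 <;> cases a2
    · exfalso
      have := h1 true
      simp [commitPay1] at this
      linarith
    · exfalso
      have := h1 true
      simp [commitPay1] at this
      linarith
    · exact ⟨rfl, rfl⟩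
    · exfalso
      have := h2 false
      simp [commitPay2] at this
      linarith
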